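/- arXiv:0806.0365 — 2 statements merged into one kernel-verified Lean document; each statement's English description precedes it below -/
import Mathlib

section
/- For every λ ≥ 0 and h ≥ 0, the limit F(λ,h) = lim_{N→∞} (1/N) 𝔼 log Z_{N,ω}(λ,h) exists (as a consequence of superadditivity of the sequence N ↦ 𝔼 log Z_{N,ω}(λ,h)), and F(λ,h) ≥ 0. -/
open MeasureTheory ProbabilityTheory Filter Finset

/-- The Boltzmann weight `(1 + exp(-2λh(b-a) - 2λ Σ_{i=a+1}^b ω_i))/2`
of a single copolymer excursion from `a` to `b`. -/
noncomputable def cw (lam h : ℝ) (ω : ℕ → ℝ) (a b : ℕ) : ℝ :=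
  (1 + Real.exp (-(2 * lam * h * ((b : ℝ) - (a : ℝ)))
      - 2 * lam * ∑ i ∈ Finset.Icc (a + 1) b, ω i)) / 2

/-- The copolymer partition function `Z_{N,ω}(λ,h)`: summing over the position `j`
of the last renewal point before `N` reproduces the sum over all renewal
configurations `0 = t_0 < t_1 < ⋯ < t_m = N` of `∏_r K(t_r - t_{r-1}) ·
(1+exp(-2λh(t_r-t_{r-1}) - 2λ Σ ω_i))/2`. -/
noncomputable def Zpart (K : ℕ → ℝ) (lam h : ℝ) (ω : ℕ → ℝ) : ℕ → ℝ
  | 0 => 1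
  | N + 1 => ∑ j ∈ (Finset.range (N + 1)).attach,
      Zpart K lam h ω j.1 * K (N + 1 - j.1) * cw lam h ω j.1 (N + 1)
  decreasing_by exact Finset.mem_range.mp j.2

/-- `P` is the joint law of an IID sequence of standard Gaussian random variables:
a probability measure on `ℕ → ℝ` under which the coordinates are independent,
each with law `gaussianReal 0 1`. -/
def IsGaussianDisorder (P : Measure (ℕ → ℝ)) : Prop :=
  IsProbabilityMeasure P ∧
    iIndepFun (fun i ω => ω i) P ∧
    ∀ i : ℕ, P.map (fun ω => ω i) = gaussianReal 0 1

variable {K : ℕ → ℝ} {lam h : ℝ} {ω : ℕ → ℝ}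

lemma cw_nonneg (lam h : ℝ) (ω : ℕ → ℝ) (a b : ℕ) : 0 ≤ cw lam h ω a b := by
  unfold cw; positivity

lemma cw_half_le (lam h : ℝ) (ω : ℕ → ℝ) (a b : ℕ) : (1:ℝ)/2 ≤ cw lam h ω a b := by
  unfold cw
  have := Real.exp_pos (-(2 * lam * h * ((b : ℝ) - (a : ℝ)))
      - 2 * lam * ∑ i ∈ Finset.Icc (a + 1) b, ω i)
  linarith

lemma cw_le (hlam : 0 ≤ lam) (hh : 0 ≤ h) {a b : ℕ} (hab : a ≤ b) :
    cw lam h ω a b ≤ ∏ i ∈ Finset.Icc (a+1) b, Real.exp (2*lam*h + 2*lam*|ω i|) := by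
  rw [← Real.exp_sum]
  set t : ℝ := -(2 * lam * h * ((b : ℝ) - (a : ℝ)))
      - 2 * lam * ∑ i ∈ Finset.Icc (a + 1) b, ω i with ht
  set T : ℝ := ∑ i ∈ Finset.Icc (a+1) b, (2*lam*h + 2*lam*|ω i|) with hT
  have hcard : ((Finset.Icc (a+1) b).card : ℝ) = (b : ℝ) - (a : ℝ) := by
    rw [Nat.card_Icc]
    have : b + 1 - (a + 1) = b - a := by omega
    rw [this, Nat.cast_sub hab]
  have hba : (0:ℝ) ≤ (b:ℝ) - a := by
    have : (a:ℝ) ≤ b := Nat.cast_le.mpr hab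
    linarith
  have habs : |t| ≤ T := by
    have h1 : |t| ≤ 2*lam*h*((b:ℝ) - a) + 2*lam*|∑ i ∈ Finset.Icc (a+1) b, ω i| := by
      calc |t| ≤ |(-(2 * lam * h * ((b : ℝ) - (a : ℝ))))| +
          |2 * lam * ∑ i ∈ Finset.Icc (a + 1) b, ω i| := abs_sub _ _
        _ = 2*lam*h*((b:ℝ) - a) + 2*lam*|∑ i ∈ Finset.Icc (a+1) b, ω i| := by
            have e1 : |(-(2*lam*h*((b:ℝ)-a)))| = 2*lam*h*((b:ℝ)-a) := by
              rw [abs_neg]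
              exact abs_of_nonneg (mul_nonneg (show (0:ℝ) ≤ 2*lam*h by positivity) hba)
            have e2 : |2 * lam * ∑ i ∈ Finset.Icc (a + 1) b, ω i|
                = 2*lam*|∑ i ∈ Finset.Icc (a+1) b, ω i| := by
              rw [abs_mul, abs_of_nonneg (show (0:ℝ) ≤ 2*lam by positivity)]
            rw [e1, e2]
    have h2 : |∑ i ∈ Finset.Icc (a+1) b, ω i| ≤ ∑ i ∈ Finset.Icc (a+1) b, |ω i| :=
      Finset.abs_sum_le_sum_abs _ _
    have h3 : T = 2*lam*h*((b:ℝ) - a) + 2*lam * ∑ i ∈ Finset.Icc (a+1) b, |ω i| := by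
      rw [hT, Finset.sum_add_distrib, Finset.sum_const, nsmul_eq_mul, hcard,
        ← Finset.mul_sum]
      ring
    have hl : (0:ℝ) ≤ 2*lam := by positivity
    have := mul_le_mul_of_nonneg_left h2 hl
    linarith
  have key : cw lam h ω a b ≤ Real.exp |t| := by
    unfold cw
    rcases le_or_gt t 0 with h0 | h0
    · have : Real.exp t ≤ 1 := by
        have := Real.exp_le_exp.mpr h0
        simpa using this
      have h1 : (1:ℝ) ≤ Real.exp |t| := Real.one_le_exp (abs_nonneg t)
      rw [← ht]
      linarith
    · have : |t| = t := abs_of_pos h0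
      rw [← ht, this]
      have : (1:ℝ) ≤ Real.exp t := Real.one_le_exp h0.le
      linarith
  exact key.trans (Real.exp_le_exp.mpr habs)

lemma Zpart_succ (K : ℕ → ℝ) (lam h : ℝ) (ω : ℕ → ℝ) (N : ℕ) :
    Zpart K lam h ω (N+1) =
      ∑ j ∈ Finset.range (N + 1), Zpart K lam h ω j * K (N + 1 - j) * cw lam h ω j (N + 1) := by
  rw [Zpart]
  exact Finset.sum_attach (Finset.range (N+1))
    (fun j => Zpart K lam h ω j * K (N + 1 - j) * cw lam h ω j (N + 1))

lemma Zpart_nonneg (hKnn : ∀ n, 0 ≤ K n) : ∀ N, 0 ≤ Zpart K lam h ω N := by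
  intro N
  induction N using Nat.strong_induction_on with
  | _ N ih =>
    match N with
    | 0 => rw [Zpart]; norm_num
    | N + 1 =>
      rw [Zpart_succ]
      refine Finset.sum_nonneg fun j hj => ?_
      have := ih j (Finset.mem_range.mp hj)
      have := cw_nonneg lam h ω j (N+1)
      have := hKnn (N+1-j)
      positivity

lemma Zpart_ge_single (hKnn : ∀ n, 0 ≤ K n) {N : ℕ} (hN : 1 ≤ N) :
    K N * cw lam h ω 0 N ≤ Zpart K lam h ω N := by
  obtain ⟨M, rfl⟩ := Nat.exists_eq_add_of_le hN
  rw [add_comm, Zpart_succ]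
  have h0 : (0:ℕ) ∈ Finset.range (M+1) := by simp
  have := Finset.single_le_sum (f := fun j =>
      Zpart K lam h ω j * K (M + 1 - j) * cw lam h ω j (M + 1))
      (fun j hj => by
        have := Zpart_nonneg (lam := lam) (h := h) (ω := ω) hKnn j
        have := cw_nonneg lam h ω j (M+1)
        have := hKnn (M+1-j)
        positivity) h0
  simpa [Zpart, one_mul] using this

lemma Zpart_half_le (hKnn : ∀ n, 0 ≤ K n) {N : ℕ} (hN : 1 ≤ N) :
    K N / 2 ≤ Zpart K lam h ω N := by
  refine le_trans ?_ (Zpart_ge_single hKnn hN)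
  have := cw_half_le lam h ω 0 N
  have := hKnn N
  nlinarith

lemma Zpart_pos (hKnn : ∀ n, 0 ≤ K n) {N : ℕ} (hN : 1 ≤ N) (hKN : 0 < K N) :
    0 < Zpart K lam h ω N :=
  lt_of_lt_of_le (by linarith : (0:ℝ) < K N / 2) (Zpart_half_le hKnn hN)

lemma sum_K_le (hKnn : ∀ n, 0 ≤ K n) (hKsum : HasSum K 1) (s : Finset ℕ) :
    ∑ n ∈ s, K n ≤ 1 :=
  sum_le_hasSum s (fun i _ => hKnn i) hKsum

lemma Zpart_le (hlam : 0 ≤ lam) (hh : 0 ≤ h) (hKnn : ∀ n, 0 ≤ K n) (hKsum : HasSum K 1) :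
    ∀ N, Zpart K lam h ω N ≤ ∏ i ∈ Finset.Icc 1 N, Real.exp (2*lam*h + 2*lam*|ω i|) := by
  intro N
  induction N using Nat.strong_induction_on with
  | _ N ih =>
    match N with
    | 0 =>
      rw [Zpart]
      simp
    | N + 1 =>
      rw [Zpart_succ]
      set w : ℕ → ℝ := fun i => Real.exp (2*lam*h + 2*lam*|ω i|) with hw
      have hw1 : ∀ i, 0 < w i := fun i => Real.exp_pos _
      have step : ∀ j ∈ Finset.range (N+1),
          Zpart K lam h ω j * K (N + 1 - j) * cw lam h ω j (N + 1)
            ≤ (∏ i ∈ Finset.Icc 1 (N+1), w i) * K (N+1-j) := by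
        intro j hj
        have hjN : j < N + 1 := Finset.mem_range.mp hj
        have h1 : Zpart K lam h ω j ≤ ∏ i ∈ Finset.Icc 1 j, w i := ih j hjN
        have h2 : cw lam h ω j (N+1) ≤ ∏ i ∈ Finset.Icc (j+1) (N+1), w i :=
          cw_le hlam hh hjN.le
        have hsplit : (∏ i ∈ Finset.Icc 1 j, w i) * ∏ i ∈ Finset.Icc (j+1) (N+1), w i
            = ∏ i ∈ Finset.Icc 1 (N+1), w i := by
          rw [Finset.Icc_add_one_left_eq_Ioc,
            show Finset.Icc 1 j = Finset.Ioc 0 j by rw [← Finset.Icc_add_one_left_eq_Ioc, zero_add],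
            show Finset.Icc 1 (N+1) = Finset.Ioc 0 (N+1) by rw [← Finset.Icc_add_one_left_eq_Ioc, zero_add]]
          exact Finset.prod_Ioc_consecutive w (Nat.zero_le j) hjN.le
        calc Zpart K lam h ω j * K (N + 1 - j) * cw lam h ω j (N + 1)
            ≤ (∏ i ∈ Finset.Icc 1 j, w i) * K (N + 1 - j) *
              ∏ i ∈ Finset.Icc (j+1) (N+1), w i := by
              refine mul_le_mul (mul_le_mul_of_nonneg_right h1 (hKnn _)) h2
                (cw_nonneg lam h ω j (N+1)) ?_
              exact mul_nonneg (Finset.prod_pos (fun i _ => hw1 i)).le (hKnn _)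
          _ = (∏ i ∈ Finset.Icc 1 (N+1), w i) * K (N+1-j) := by
              rw [mul_right_comm, hsplit]
      calc ∑ j ∈ Finset.range (N + 1),
            Zpart K lam h ω j * K (N + 1 - j) * cw lam h ω j (N + 1)
          ≤ ∑ j ∈ Finset.range (N+1), (∏ i ∈ Finset.Icc 1 (N+1), w i) * K (N+1-j) :=
            Finset.sum_le_sum step
        _ = (∏ i ∈ Finset.Icc 1 (N+1), w i) * ∑ j ∈ Finset.range (N+1), K (N+1-j) := by
            rw [Finset.mul_sum]
        _ ≤ (∏ i ∈ Finset.Icc 1 (N+1), w i) * 1 := by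
            have : ∑ j ∈ Finset.range (N+1), K (N+1-j)
                = ∑ m ∈ (Finset.range (N+1)).image (fun j => N+1-j), K m :=
              (Finset.sum_image (fun x hx y hy hxy => by
                simp only [Finset.coe_range, Set.mem_Iio] at hx hy
                have hxy' : N+1-x = N+1-y := hxy
                omega)).symm
            rw [this]
            exact mul_le_mul_of_nonneg_left
              (sum_K_le hKnn hKsum _) (Finset.prod_pos (fun i _ => hw1 i)).le
        _ = ∏ i ∈ Finset.Icc 1 (N+1), w i := mul_one _

lemma Zpart_zero (K : ℕ → ℝ) (lam h : ℝ) (ω : ℕ → ℝ) : Zpart K lam h ω 0 = 1 := by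
  rw [Zpart]

lemma Zpart_congr {ω' : ℕ → ℝ} : ∀ N, (∀ i, 1 ≤ i → i ≤ N → ω i = ω' i) →
    Zpart K lam h ω N = Zpart K lam h ω' N := by
  intro N
  induction N using Nat.strong_induction_on with
  | _ N ih =>
    match N with
    | 0 => intro _; rw [Zpart_zero, Zpart_zero]
    | N + 1 =>
      intro hco
      rw [Zpart_succ, Zpart_succ]
      refine Finset.sum_congr rfl fun j hj => ?_
      have hjN := Finset.mem_range.mp hj
      have h1 : Zpart K lam h ω j = Zpart K lam h ω' j :=
        ih j hjN (fun i hi1 hi2 => hco i hi1 (by omega))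
      have h2 : cw lam h ω j (N+1) = cw lam h ω' j (N+1) := by
        unfold cw
        have : ∑ i ∈ Finset.Icc (j + 1) (N+1), ω i = ∑ i ∈ Finset.Icc (j + 1) (N+1), ω' i := by
          refine Finset.sum_congr rfl fun i hi => ?_
          rw [Finset.mem_Icc] at hi
          exact hco i (by omega) hi.2
        rw [this]
      rw [h1, h2]

lemma cw_shift (N a b : ℕ) :
    cw lam h (fun i => ω (i + N)) a b = cw lam h ω (a + N) (b + N) := by
  unfold cw
  have h1 : ((b + N : ℕ) : ℝ) - ((a + N : ℕ) : ℝ) = (b:ℝ) - a := by push_cast; ring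
  have h2 : ∑ i ∈ Finset.Icc (a + 1) b, ω (i + N)
      = ∑ i ∈ Finset.Icc (a + N + 1) (b + N), ω i := by
    rw [show a + N + 1 = (a+1) + N by omega, ← Finset.image_add_right_Icc]
    rw [Finset.sum_image (fun x _ y _ hxy => by omega)]
  rw [h1, h2]

lemma Zpart_superadd (hlam : 0 ≤ lam) (hh : 0 ≤ h) (hKnn : ∀ n, 0 ≤ K n) (N : ℕ) :
    ∀ M, Zpart K lam h ω N * Zpart K lam h (fun i => ω (i + N)) M
      ≤ Zpart K lam h ω (N + M) := by
  intro M
  induction M using Nat.strong_induction_on with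
  | _ M ih =>
    match M with
    | 0 =>
      rw [Zpart_zero, mul_one]
      exact le_rfl
    | M + 1 =>
      set ω' : ℕ → ℝ := fun i => ω (i + N) with hω'
      set f : ℕ → ℝ := fun j => Zpart K lam h ω j * K (N + M + 1 - j) * cw lam h ω j (N + M + 1)
        with hf
      have hfnn : ∀ j, 0 ≤ f j := fun j =>
        mul_nonneg (mul_nonneg (Zpart_nonneg hKnn j) (hKnn _)) (cw_nonneg _ _ _ _ _)
      have key : ∀ j ∈ Finset.range (M+1),
          Zpart K lam h ω N * (Zpart K lam h ω' j * K (M + 1 - j) * cw lam h ω' j (M + 1))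
          ≤ f (j + N) := by
        intro j hj
        have hjM := Finset.mem_range.mp hj
        have e1 : K (N + M + 1 - (j + N)) = K (M + 1 - j) := by congr 1; omega
        have e2 : cw lam h ω' j (M+1) = cw lam h ω (j + N) (N + M + 1) := by
          rw [hω', cw_shift]
          congr 1
          omega
        have hIH : Zpart K lam h ω N * Zpart K lam h ω' j ≤ Zpart K lam h ω (j + N) := by
          rw [show j + N = N + j by omega]
          exact ih j hjM
        rw [hf]
        dsimp only
        rw [e1, e2]
        calc Zpart K lam h ω N * (Zpart K lam h ω' j * K (M + 1 - j) * cw lam h ω (j+N) (N+M+1))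
            = (Zpart K lam h ω N * Zpart K lam h ω' j) * K (M + 1 - j) * cw lam h ω (j+N) (N+M+1) := by
              ring
          _ ≤ Zpart K lam h ω (j + N) * K (M + 1 - j) * cw lam h ω (j+N) (N+M+1) := by
              exact mul_le_mul_of_nonneg_right
                (mul_le_mul_of_nonneg_right hIH (hKnn _)) (cw_nonneg _ _ _ _ _)
      have hsub : (Finset.range (M+1)).image (· + N) ⊆ Finset.range (N + M + 1) := by
        intro x hx
        simp only [Finset.mem_image, Finset.mem_range] at hx ⊢
        obtain ⟨j, hj, rfl⟩ := hx
        omega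
      calc Zpart K lam h ω N * Zpart K lam h ω' (M + 1)
          = ∑ j ∈ Finset.range (M+1),
            Zpart K lam h ω N * (Zpart K lam h ω' j * K (M + 1 - j) * cw lam h ω' j (M + 1)) := by
            rw [Zpart_succ, Finset.mul_sum]
        _ ≤ ∑ j ∈ Finset.range (M+1), f (j + N) := Finset.sum_le_sum key
        _ = ∑ j ∈ (Finset.range (M+1)).image (· + N), f j :=
            (Finset.sum_image (fun x _ y _ hxy => by omega)).symm
        _ ≤ ∑ j ∈ Finset.range (N + M + 1), f j :=
            Finset.sum_le_sum_of_subset_of_nonneg hsub (fun j _ _ => hfnn j)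
        _ = Zpart K lam h ω (N + (M + 1)) := by
            rw [show N + (M + 1) = (N + M) + 1 by omega, Zpart_succ]

lemma measurable_cw (lam h : ℝ) (a b : ℕ) : Measurable (fun ω : ℕ → ℝ => cw lam h ω a b) := by
  unfold cw
  have : Measurable (fun ω : ℕ → ℝ => ∑ i ∈ Finset.Icc (a + 1) b, ω i) :=
    Finset.measurable_sum _ (fun i _ => measurable_pi_apply i)
  fun_prop

lemma measurable_Zpart (K : ℕ → ℝ) (lam h : ℝ) (N : ℕ) :
    Measurable (fun ω : ℕ → ℝ => Zpart K lam h ω N) := by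
  induction N using Nat.strong_induction_on with
  | _ N ih =>
    match N with
    | 0 => simp only [Zpart_zero]; exact measurable_const
    | N + 1 =>
      simp only [Zpart_succ]
      refine Finset.measurable_sum _ (fun j hj => ?_)
      have hjN := Finset.mem_range.mp hj
      exact ((ih j hjN).mul measurable_const).mul (measurable_cw lam h j (N+1))

lemma integrable_abs_gauss : Integrable (fun x : ℝ => |x|) (gaussianReal 0 1) := by
  rw [gaussianReal_of_var_ne_zero 0 one_ne_zero]
  rw [integrable_withDensity_iff (measurable_gaussianPDF 0 1)
    (Filter.Eventually.of_forall fun x => ENNReal.ofReal_lt_top)]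
  have : (fun x : ℝ => |x| * (gaussianPDF 0 1 x).toReal)
      = fun x => (Real.sqrt (2 * Real.pi * 1))⁻¹ * |x * Real.exp (-(1/2) * x^2)| := by
    ext x
    rw [gaussianPDF, ENNReal.toReal_ofReal (gaussianPDFReal_nonneg 0 1 x), gaussianPDFReal]
    rw [abs_mul, abs_of_nonneg (Real.exp_nonneg _)]
    push_cast
    ring_nf
  rw [this]
  exact ((integrable_mul_exp_neg_mul_sq (by norm_num : (0:ℝ) < 1/2)).abs).const_mul _

lemma integrable_abs_coord {P : Measure (ℕ → ℝ)} (hP : IsGaussianDisorder P) (i : ℕ) :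
    Integrable (fun ω : ℕ → ℝ => |ω i|) P := by
  have hmeas : AEMeasurable (fun ω : ℕ → ℝ => ω i) P := (measurable_pi_apply i).aemeasurable
  have hg : Integrable (fun x : ℝ => |x|) (P.map (fun ω => ω i)) := by
    rw [hP.2.2 i]
    exact integrable_abs_gauss
  exact (integrable_map_measure measurable_abs.aestronglyMeasurable hmeas).mp hg

lemma integral_abs_coord {P : Measure (ℕ → ℝ)} (hP : IsGaussianDisorder P) (i : ℕ) :
    ∫ ω, |ω i| ∂P = ∫ x, |x| ∂(gaussianReal 0 1) := by
  have key := integral_map (μ := P) (φ := fun ω : ℕ → ℝ => ω i) (f := fun x : ℝ => |x|)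
    (measurable_pi_apply i).aemeasurable measurable_abs.aestronglyMeasurable
  rw [hP.2.2 i] at key
  exact key.symm

/-- The joint law of finitely many distinct coordinates is the product of Gaussians. -/
lemma map_restr {P : Measure (ℕ → ℝ)} (hP : IsGaussianDisorder P) (c M : ℕ) :
    P.map (fun ω (k : Fin M) => ω (c + 1 + (k : ℕ)))
      = Measure.pi (fun _ : Fin M => gaussianReal 0 1) := by
  haveI := hP.1
  have hmeas : Measurable (fun ω : ℕ → ℝ => fun k : Fin M => ω (c + 1 + (k : ℕ))) :=
    measurable_pi_lambda _ (fun k => measurable_pi_apply _)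
  refine (Measure.pi_eq fun s hs => ?_).symm
  rw [Measure.map_apply hmeas (MeasurableSet.univ_pi hs)]
  set σ : Fin M → ℕ := fun k => c + 1 + (k : ℕ) with hσ
  have hσinj : Function.Injective σ := by
    intro x y hxy
    have : (x : ℕ) = y := by simp only [hσ] at hxy; omega
    exact Fin.ext this
  set sets : ℕ → Set ℝ := fun n => ⋂ (k : Fin M) (_ : σ k = n), s k with hsets
  have hsets_meas : ∀ n, MeasurableSet (sets n) :=
    fun n => MeasurableSet.iInter fun k => MeasurableSet.iInter fun _ => hs k
  have hsets_eq : ∀ k : Fin M, sets (σ k) = s k := by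
    intro k
    rw [hsets]
    ext x
    simp only [Set.mem_iInter]
    constructor
    · intro hx; exact hx k rfl
    · intro hx k' hk'
      cases hσinj hk'
      exact hx
  have hpre : (fun ω : ℕ → ℝ => fun k : Fin M => ω (σ k)) ⁻¹' Set.pi Set.univ s
      = ⋂ n ∈ Finset.image σ Finset.univ, (fun ω : ℕ → ℝ => ω n) ⁻¹' sets n := by
    ext ω
    simp only [Set.mem_preimage, Set.mem_pi, Set.mem_univ, forall_true_left,
      Set.mem_iInter, Finset.mem_image, Finset.mem_univ, true_and]
    constructor
    · rintro hω n ⟨k, rfl⟩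
      rw [hsets_eq k]
      exact hω k
    · intro hω k
      have := hω (σ k) ⟨k, rfl⟩
      rwa [hsets_eq k] at this
  rw [hpre]
  rw [hP.2.1.measure_inter_preimage_eq_mul (Finset.image σ Finset.univ)
    (fun n _ => hsets_meas n)]
  rw [Finset.prod_image (fun x _ y _ hxy => hσinj hxy)]
  refine Finset.prod_congr rfl fun k _ => ?_
  rw [hsets_eq k]
  rw [← Measure.map_apply (measurable_pi_apply (σ k)) (hs k), hP.2.2 (σ k)]

set_option maxHeartbeats 2000000 in
lemma fekete_super (a : ℕ → ℝ) (n₀ : ℕ) (hn₀ : 1 ≤ n₀)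
    (hsuper : ∀ m n, n₀ ≤ m → n₀ ≤ n → a m + a n ≤ a (m + n))
    (c : ℝ) (hub : ∀ N, n₀ ≤ N → a N ≤ c * N) :
    ∃ L : ℝ, (∀ N, n₀ ≤ N → a N / N ≤ L) ∧
      Tendsto (fun N : ℕ => a N / N) atTop (nhds L) := by
  set S : Set ℝ := {x | ∃ N, n₀ ≤ N ∧ a N / N = x} with hS
  have hne : S.Nonempty := ⟨a n₀ / n₀, n₀, le_rfl, rfl⟩
  have hbdd : BddAbove S := by
    refine ⟨c, ?_⟩
    rintro x ⟨N, hN, rfl⟩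
    have hNpos : (0:ℝ) < N := by
      have : 1 ≤ N := le_trans hn₀ hN
      exact_mod_cast Nat.lt_of_lt_of_le Nat.zero_lt_one this
    rw [div_le_iff₀ hNpos]
    have := hub N hN
    linarith
  set L := sSup S with hL
  have hle : ∀ N, n₀ ≤ N → a N / N ≤ L := fun N hN => le_csSup hbdd ⟨N, hN, rfl⟩
  refine ⟨L, hle, ?_⟩
  rw [Metric.tendsto_atTop]
  intro ε hε
  obtain ⟨x, hxS, hx⟩ := exists_lt_of_lt_csSup hne (show L - ε/2 < L by linarith)
  obtain ⟨m, hm, rfl⟩ := hxS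
  have hm1 : 1 ≤ m := le_trans hn₀ hm
  have hmR : (0:ℝ) < m := by exact_mod_cast Nat.lt_of_lt_of_le Nat.zero_lt_one hm1
  -- iteration lemma
  have iter : ∀ q r : ℕ, n₀ ≤ r → (q : ℝ) * a m + a r ≤ a (q * m + r) := by
    intro q
    induction q with
    | zero => intro r hr; simp
    | succ q iq =>
      intro r hr
      have h1 := iq r hr
      have h2 : a m + a (q * m + r) ≤ a (m + (q * m + r)) :=
        hsuper m (q * m + r) hm (le_trans hr (by omega))
      have h3 : (q + 1) * m + r = m + (q * m + r) := by ring
      rw [h3]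
      push_cast
      linarith
  set I := Finset.Icc n₀ (n₀ + m) with hI
  have hIne : I.Nonempty := ⟨n₀, by simp [hI, Finset.mem_Icc]⟩
  set R := I.inf' hIne a with hR
  have hRle : ∀ r ∈ I, R ≤ a r := fun r hr => Finset.inf'_le a hr
  obtain ⟨D, hD⟩ : ∃ D : ℝ, D = ((n₀:ℝ) + m) * |a m| / m + |R| := ⟨_, rfl⟩
  have hDnn : 0 ≤ D := by rw [hD]; positivity
  obtain ⟨M₀, hM₀⟩ := exists_nat_gt (2 * D / ε)
  refine ⟨max M₀ (n₀ + m + 1), fun N hN => ?_⟩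
  have hN1 : M₀ ≤ N := le_trans (le_max_left _ _) hN
  have hN2 : n₀ + m + 1 ≤ N := le_trans (le_max_right _ _) hN
  have hNR : (0:ℝ) < N := by
    have : 1 ≤ N := by omega
    exact_mod_cast Nat.lt_of_lt_of_le Nat.zero_lt_one this
  -- decomposition N = q * m + r
  set q := (N - n₀) / m with hq
  set s := (N - n₀) % m with hs
  set r := n₀ + s with hr
  have hdm : m * q + s = N - n₀ := Nat.div_add_mod _ _
  have hsm : s < m := Nat.mod_lt _ (by omega)
  have hNq : q * m + r = N := by
    have h' : q * m = m * q := Nat.mul_comm _ _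
    rw [h', hr]
    omega
  have hr1 : n₀ ≤ r := by omega
  have hr2 : r ≤ n₀ + m := by omega
  have hiter : (q:ℝ) * a m + a r ≤ a N := by
    rw [← hNq]
    exact iter q r hr1
  have haR : R ≤ a r := hRle r (Finset.mem_Icc.mpr ⟨hr1, hr2⟩)
  have hqm : (q:ℝ) * m = (N:ℝ) - r := by
    have := congrArg (Nat.cast : ℕ → ℝ) hNq
    push_cast at this
    linarith
  have hrcast : (0:ℝ) ≤ (r:ℝ) ∧ (r:ℝ) ≤ (n₀:ℝ) + m := by
    constructor
    · positivity
    · exact_mod_cast hr2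
  -- main estimate: a m * N - (D * m) ≤ a N * m
  have p1 : (r:ℝ) * a m ≤ ((n₀:ℝ) + m) * |a m| := by
    calc (r:ℝ) * a m ≤ (r:ℝ) * |a m| :=
          mul_le_mul_of_nonneg_left (le_abs_self _) hrcast.1
      _ ≤ ((n₀:ℝ) + m) * |a m| := mul_le_mul_of_nonneg_right hrcast.2 (abs_nonneg _)
  have p2 : -|R| * m ≤ R * m := mul_le_mul_of_nonneg_right (neg_abs_le R) hmR.le
  have g1 : (q:ℝ) * a m + R ≤ a N := by linarith
  have g2 : ((q:ℝ) * a m + R) * m ≤ a N * m := mul_le_mul_of_nonneg_right g1 hmR.le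
  have g3 : ((q:ℝ) * a m + R) * m = (N:ℝ) * a m - r * a m + R * m := by
    have e : ((q:ℝ) * a m + R) * m = ((q:ℝ) * m) * a m + R * m := by ring
    rw [e, hqm]
    ring
  have hDm : D * m = ((n₀:ℝ) + m) * |a m| + |R| * m := by
    rw [hD]
    field_simp
  have key_m : a m * (N:ℝ) - D * m ≤ a N * m := by
    rw [hDm]
    linarith
  -- divide
  have hDN : a m / m - D / N ≤ a N / N := by
    rw [div_sub_div _ _ (ne_of_gt hmR) (ne_of_gt hNR), div_le_div_iff₀ (by positivity) hNR]
    nlinarith [mul_le_mul_of_nonneg_right key_m hNR.le]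
  have hDN2 : D / N < ε / 2 := by
    rw [div_lt_iff₀ hNR]
    have hcast : (M₀:ℝ) ≤ N := Nat.cast_le.mpr hN1
    have h2D : 2 * D < (N:ℝ) * ε := by
      have h3 := (div_lt_iff₀ hε).mp (lt_of_lt_of_le hM₀ hcast)
      nlinarith [h3]
    nlinarith [h2D]
  have up : a N / N ≤ L := hle N (by omega)
  have low : L - ε < a N / N := by linarith
  rw [Real.dist_eq, abs_lt]
  constructor <;> linarith

/-- Embedding of finitely many coordinates back into a sequence. -/
noncomputable def Eembed (M : ℕ) (x : Fin M → ℝ) : ℕ → ℝ := fun i =>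
  if hi : 1 ≤ i ∧ i ≤ M then x ⟨i - 1, by omega⟩ else 0

lemma measurable_Eembed (M : ℕ) : Measurable (Eembed M) := by
  refine measurable_pi_lambda _ (fun i => ?_)
  unfold Eembed
  by_cases hi : 1 ≤ i ∧ i ≤ M
  · simp only [dif_pos hi]
    exact measurable_pi_apply _
  · simp only [dif_neg hi]
    exact measurable_const

lemma Eembed_eval (M c : ℕ) (ω : ℕ → ℝ) {i : ℕ} (h1 : 1 ≤ i) (h2 : i ≤ M) :
    Eembed M (fun k : Fin M => ω (c + 1 + (k : ℕ))) i = ω (i + c) := by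
  unfold Eembed
  rw [dif_pos ⟨h1, h2⟩]
  show ω (c + 1 + (i - 1)) = ω (i + c)
  congr 1
  omega

/-- Bounds on `log Zpart`. -/
lemma log_Zpart_bounds (hlam : 0 ≤ lam) (hh : 0 ≤ h) (hKnn : ∀ n, 0 ≤ K n)
    (hKsum : HasSum K 1) {N : ℕ} (hN : 1 ≤ N) (hKN : 0 < K N) (ω : ℕ → ℝ) :
    Real.log (K N / 2) ≤ Real.log (Zpart K lam h ω N) ∧
      Real.log (Zpart K lam h ω N) ≤ ∑ i ∈ Finset.Icc 1 N, (2*lam*h + 2*lam*|ω i|) := by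
  have hpos : 0 < Zpart K lam h ω N := Zpart_pos hKnn hN hKN
  constructor
  · exact Real.log_le_log (by linarith) (Zpart_half_le hKnn hN)
  · have hle := Zpart_le (ω := ω) hlam hh hKnn hKsum N
    calc Real.log (Zpart K lam h ω N)
        ≤ Real.log (∏ i ∈ Finset.Icc 1 N, Real.exp (2*lam*h + 2*lam*|ω i|)) :=
          Real.log_le_log hpos hle
      _ = ∑ i ∈ Finset.Icc 1 N, (2*lam*h + 2*lam*|ω i|) := by
          rw [← Real.exp_sum, Real.log_exp]

lemma integrable_gbound {P : Measure (ℕ → ℝ)} (hP : IsGaussianDisorder P) (N c : ℕ) :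
    Integrable (fun ω : ℕ → ℝ => ∑ i ∈ Finset.Icc 1 N, (2*lam*h + 2*lam*|ω (i + c)|)) P := by
  haveI := hP.1
  refine integrable_finset_sum _ (fun i _ => ?_)
  exact (integrable_const _).add ((integrable_abs_coord hP (i + c)).const_mul _)

lemma integrable_log_Zpart_shift {P : Measure (ℕ → ℝ)} (hP : IsGaussianDisorder P)
    (hlam : 0 ≤ lam) (hh : 0 ≤ h) (hKnn : ∀ n, 0 ≤ K n) (hKsum : HasSum K 1)
    {N : ℕ} (hN : 1 ≤ N) (hKN : 0 < K N) (c : ℕ) :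
    Integrable (fun ω : ℕ → ℝ => Real.log (Zpart K lam h (fun i => ω (i + c)) N)) P := by
  haveI := hP.1
  have hshift : Measurable (fun ω : ℕ → ℝ => (fun i => ω (i + c)) : (ℕ → ℝ) → (ℕ → ℝ)) :=
    measurable_pi_lambda _ (fun i => measurable_pi_apply _)
  have hmeas : Measurable (fun ω : ℕ → ℝ => Real.log (Zpart K lam h (fun i => ω (i + c)) N)) :=
    Real.measurable_log.comp ((measurable_Zpart K lam h N).comp hshift)
  refine Integrable.mono'
    (g := fun ω => |Real.log (K N / 2)| + ∑ i ∈ Finset.Icc 1 N, (2*lam*h + 2*lam*|ω (i + c)|))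
    ((integrable_const _).add (integrable_gbound hP N c)) hmeas.aestronglyMeasurable
    (Filter.Eventually.of_forall fun ω => ?_)
  show ‖Real.log (Zpart K lam h (fun i => ω (i + c)) N)‖
      ≤ |Real.log (K N / 2)| + ∑ i ∈ Finset.Icc 1 N, (2*lam*h + 2*lam*|ω (i + c)|)
  obtain ⟨hlo, hhi⟩ := log_Zpart_bounds hlam hh hKnn hKsum hN hKN (fun i => ω (i + c))
  have hgnn : 0 ≤ ∑ i ∈ Finset.Icc 1 N, (2*lam*h + 2*lam*|ω (i + c)|) :=
    Finset.sum_nonneg fun i _ => by positivity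
  rw [Real.norm_eq_abs, abs_le]
  constructor
  · have := neg_abs_le (Real.log (K N / 2))
    linarith
  · have h2 := le_abs_self (Real.log (K N / 2))
    have h3 := abs_nonneg (Real.log (K N / 2))
    linarith

lemma shift_zero_eq (f : (ℕ → ℝ) → ℝ) :
    (fun ω : ℕ → ℝ => f (fun i => ω (i + 0))) = f := by
  funext ω
  congr 1

/-- The expected `log Zpart` of the shifted disorder equals the unshifted one. -/
lemma integral_log_shift {P : Measure (ℕ → ℝ)} (hP : IsGaussianDisorder P)
    (K : ℕ → ℝ) (lam h : ℝ) (M c : ℕ) (hM : 1 ≤ M) :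
    ∫ ω, Real.log (Zpart K lam h (fun i => ω (i + c)) M) ∂P
      = ∫ ω, Real.log (Zpart K lam h ω M) ∂P := by
  set G : (Fin M → ℝ) → ℝ := fun x => Real.log (Zpart K lam h (Eembed M x) M) with hG
  have hG_meas : Measurable G :=
    Real.measurable_log.comp ((measurable_Zpart K lam h M).comp (measurable_Eembed M))
  have key : ∀ c : ℕ, ∫ ω, Real.log (Zpart K lam h (fun i => ω (i + c)) M) ∂P
      = ∫ x, G x ∂(Measure.pi (fun _ : Fin M => gaussianReal 0 1)) := by
    intro c
    have hrestr : Measurable (fun ω : ℕ → ℝ => fun k : Fin M => ω (c + 1 + (k : ℕ))) :=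
      measurable_pi_lambda _ (fun k => measurable_pi_apply _)
    rw [← map_restr hP c M, integral_map hrestr.aemeasurable hG_meas.aestronglyMeasurable]
    refine integral_congr_ae (Filter.Eventually.of_forall fun ω => ?_)
    show Real.log (Zpart K lam h (fun i => ω (i + c)) M)
        = Real.log (Zpart K lam h (Eembed M (fun k : Fin M => ω (c + 1 + (k:ℕ)))) M)
    exact (congrArg Real.log (Zpart_congr M fun i h1 h2 => Eembed_eval M c ω h1 h2)).symm
  have h0 := key 0
  rw [shift_zero_eq (fun ω' => Real.log (Zpart K lam h ω' M))] at h0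
  rw [key c, h0]


/-- for every `λ ≥ 0` and `h ≥ 0` the limit
`F(λ,h) = lim_N (1/N) 𝔼 log Z_{N,ω}(λ,h)` exists and is nonnegative. -/
theorem free_energy_exists_and_nonneg
    (K : ℕ → ℝ) (α CK : ℝ) (hα : 0 < α) (hCK : 0 < CK)
    (hK0 : K 0 = 0) (hKnn : ∀ n, 0 ≤ K n) (hKsum : HasSum K 1)
    (hTail : Tendsto (fun n : ℕ => (n : ℝ) ^ (1 + α) * K n) atTop (nhds CK))
    (P : Measure (ℕ → ℝ)) (hP : IsGaussianDisorder P)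
    (lam h : ℝ) (hlam : 0 ≤ lam) (hh : 0 ≤ h) :
    ∃ F : ℝ, 0 ≤ F ∧
      Tendsto (fun N : ℕ => ((N : ℝ))⁻¹ * ∫ ω, Real.log (Zpart K lam h ω N) ∂P)
        atTop (nhds F) := by
  haveI := hP.1
  -- eventual positivity of K
  obtain ⟨n₁, hn₁⟩ : ∃ n₁ : ℕ, ∀ n, n₁ ≤ n → CK/2 < (n:ℝ)^(1+α) * K n :=
    eventually_atTop.mp (hTail.eventually (eventually_gt_nhds (by linarith : CK/2 < CK)))
  set n₀ := max n₁ 1 with hn₀def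
  have hn₀1 : 1 ≤ n₀ := le_max_right _ _
  have hKpos : ∀ n, n₀ ≤ n → 0 < K n := by
    intro n hn
    have h1 := hn₁ n (le_trans (le_max_left _ _) hn)
    have hnn : (1:ℝ) ≤ (n:ℝ) := by exact_mod_cast le_trans (le_max_right _ _) hn
    rcases (hKnn n).lt_or_eq with hgt | heq
    · exact hgt
    · exfalso
      rw [← heq, mul_zero] at h1
      linarith
  set a : ℕ → ℝ := fun N => ∫ ω, Real.log (Zpart K lam h ω N) ∂P with ha
  have hint : ∀ N, n₀ ≤ N → Integrable (fun ω => Real.log (Zpart K lam h ω N)) P :=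
    fun N hN => integrable_log_Zpart_shift hP hlam hh hKnn hKsum
      (le_trans hn₀1 hN) (hKpos N hN) 0
  -- superadditivity
  have hsuper : ∀ m n, n₀ ≤ m → n₀ ≤ n → a m + a n ≤ a (m + n) := by
    intro m n hm hn
    have hm1 : 1 ≤ m := le_trans hn₀1 hm
    have hn1 : 1 ≤ n := le_trans hn₀1 hn
    have hint_m := hint m hm
    have hint_shift := integrable_log_Zpart_shift hP hlam hh hKnn hKsum hn1 (hKpos n hn) m
    have hint_mn := hint (m+n) (by omega)
    have hstep : a n = ∫ ω, Real.log (Zpart K lam h (fun i => ω (i + m)) n) ∂P :=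
      (integral_log_shift hP K lam h n m hn1).symm
    have hpt : ∀ ω : ℕ → ℝ,
        Real.log (Zpart K lam h ω m) + Real.log (Zpart K lam h (fun i => ω (i+m)) n)
          ≤ Real.log (Zpart K lam h ω (m+n)) := by
      intro ω
      have hZm : 0 < Zpart K lam h ω m := Zpart_pos hKnn hm1 (hKpos m hm)
      have hZn : 0 < Zpart K lam h (fun i => ω (i+m)) n := Zpart_pos hKnn hn1 (hKpos n hn)
      rw [← Real.log_mul hZm.ne' hZn.ne']
      exact Real.log_le_log (mul_pos hZm hZn) (Zpart_superadd hlam hh hKnn m n)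
    have hint_sum : Integrable (fun ω : ℕ → ℝ => Real.log (Zpart K lam h ω m)
        + Real.log (Zpart K lam h (fun i => ω (i+m)) n)) P := hint_m.add hint_shift
    have hmono := integral_mono hint_sum hint_mn hpt
    rw [integral_add hint_m hint_shift] at hmono
    have ham : a m = ∫ ω, Real.log (Zpart K lam h ω m) ∂P := rfl
    have hamn : a (m+n) = ∫ ω, Real.log (Zpart K lam h ω (m+n)) ∂P := rfl
    rw [ham, hamn, hstep]
    exact hmono
  -- upper bound
  set c₀ : ℝ := ∫ x, |x| ∂(gaussianReal 0 1) with hc₀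
  have hub : ∀ N, n₀ ≤ N → a N ≤ (2*lam*h + 2*lam*c₀) * N := by
    intro N hN
    have hN1 : 1 ≤ N := le_trans hn₀1 hN
    have h1 : a N ≤ ∫ ω, ∑ i ∈ Finset.Icc 1 N, (2*lam*h + 2*lam*|ω (i+0)|) ∂P := by
      refine integral_mono (hint N hN) (integrable_gbound hP N 0) (fun ω => ?_)
      exact (log_Zpart_bounds hlam hh hKnn hKsum hN1 (hKpos N hN) ω).2
    have hint_abs : ∀ i : ℕ, Integrable (fun ω : ℕ → ℝ => 2*lam*|ω (i+0)|) P :=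
      fun i => (integrable_abs_coord hP (i+0)).const_mul _
    have hint_i : ∀ i : ℕ, Integrable (fun ω : ℕ → ℝ => 2*lam*h + 2*lam*|ω (i+0)|) P :=
      fun i => (integrable_const _).add (hint_abs i)
    have h2 : ∫ ω, ∑ i ∈ Finset.Icc 1 N, (2*lam*h + 2*lam*|ω (i+0)|) ∂P
        = ∑ i ∈ Finset.Icc 1 N, (2*lam*h + 2*lam*c₀) := by
      rw [integral_finset_sum _ (fun i _ => hint_i i)]
      refine Finset.sum_congr rfl fun i _ => ?_
      rw [integral_add (integrable_const _) (hint_abs i),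
        integral_const, probReal_univ, one_smul,
        integral_const_mul, integral_abs_coord hP (i+0)]
    have h3 : ∑ i ∈ Finset.Icc 1 N, (2*lam*h + 2*lam*c₀) = (N:ℝ) * (2*lam*h + 2*lam*c₀) := by
      rw [Finset.sum_const, Nat.card_Icc]
      simp [nsmul_eq_mul]
      ring
    rw [h2, h3] at h1
    linarith
  obtain ⟨L, hle, htend⟩ := fekete_super a n₀ hn₀1 hsuper _ hub
  -- nonnegativity of L
  have hlow : ∀ N, n₀ ≤ N → Real.log (K N / 2) / N ≤ a N / N := by
    intro N hN
    have hN1 : 1 ≤ N := le_trans hn₀1 hN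
    have hNpos : (0:ℝ) < N := by exact_mod_cast Nat.lt_of_lt_of_le Nat.zero_lt_one hN1
    have hub2 : Real.log (K N / 2) ≤ a N := by
      have hmono := integral_mono (integrable_const (Real.log (K N / 2))) (hint N hN)
        (fun ω => (log_Zpart_bounds hlam hh hKnn hKsum hN1 (hKpos N hN) ω).1)
      rwa [integral_const, probReal_univ, one_smul] at hmono
    exact div_le_div_of_nonneg_right hub2 hNpos.le
  have htendlog : Tendsto (fun N : ℕ => Real.log (K N / 2) / N) atTop (nhds 0) := by
    have hlog2 : Tendsto (fun N : ℕ => Real.log 2 / N) atTop (nhds 0) :=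
      tendsto_const_div_atTop_nhds_zero_nat _
    have hlogN : Tendsto (fun N : ℕ => Real.log N / N) atTop (nhds 0) :=
      Real.isLittleO_log_id_atTop.tendsto_div_nhds_zero.comp tendsto_natCast_atTop_atTop
    have hlogt : Tendsto (fun N : ℕ => Real.log ((N:ℝ)^(1+α) * K N) / N) atTop (nhds 0) :=
      Tendsto.div_atTop ((Real.continuousAt_log (ne_of_gt hCK)).tendsto.comp hTail)
        tendsto_natCast_atTop_atTop
    have hcomb := (hlogt.sub ((hlogN.const_mul (1+α)))).sub hlog2
    rw [show (0:ℝ) - (1+α) * 0 - 0 = 0 by ring] at hcomb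
    refine Tendsto.congr' ?_ hcomb
    rw [Filter.eventuallyEq_iff_exists_mem]
    refine ⟨{N | n₀ ≤ N}, mem_atTop n₀, fun N hN => ?_⟩
    have hN1 : 1 ≤ N := le_trans hn₀1 hN
    have hNpos : (0:ℝ) < N := by exact_mod_cast Nat.lt_of_lt_of_le Nat.zero_lt_one hN1
    have hrne : ((N:ℝ)^(1+α)) ≠ 0 := (Real.rpow_pos_of_pos hNpos _).ne'
    have hKne : K N ≠ 0 := (hKpos N hN).ne'
    show Real.log ((N:ℝ)^(1+α) * K N) / N - (1+α) * (Real.log N / N) - Real.log 2 / N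
        = Real.log (K N / 2) / N
    rw [Real.log_mul hrne hKne, Real.log_rpow hNpos, Real.log_div hKne two_ne_zero]
    ring
  have hL0 : 0 ≤ L := by
    refine le_of_tendsto htendlog (eventually_atTop.mpr ⟨n₀, fun N hN => ?_⟩)
    exact le_trans (hlow N hN) (hle N hN)
  refine ⟨L, hL0, ?_⟩
  refine htend.congr (fun N => ?_)
  rw [div_eq_inv_mul]
end

section
/- Let ω = (ω_i)_{i≥1} be i.i.d. standard Gaussian random variables, let λ > 0 and 0 < γ < ρ < 1, set h = ρλ, and for a finite set I ⊂ ℕ define φ(I) = (1 + exp(−2λh|I| − 2λ Σ_{i∈I} ω_i))/2. Then 𝔼[φ(I)^γ] ≤ (1 + exp(2λ²γ(γ − ρ)|I|)) / 2^γ ≤ 2^{1−γ}. -/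
open MeasureTheory ProbabilityTheory Filter Finset

open Real

lemma rpow_one_add_le (x γ : ℝ) (hx : 0 ≤ x) (hγ0 : 0 < γ) (hγ1 : γ ≤ 1) :
    (1 + x) ^ γ ≤ 1 + x ^ γ := by
  lift x to NNReal using hx
  have h := NNReal.rpow_add_rpow_le 1 x hγ0 (hγ1 : γ ≤ (1:ℝ))
  simp only [NNReal.rpow_one, one_div_one, NNReal.rpow_one, NNReal.one_rpow] at h
  have h2 : ((1 + x) : NNReal) ^ γ ≤ ((1 + x ^ γ) ^ (1/γ) : NNReal) ^ γ :=
    NNReal.rpow_le_rpow h hγ0.le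
  rw [← NNReal.rpow_mul, one_div, inv_mul_cancel₀ hγ0.ne', NNReal.rpow_one] at h2
  have := NNReal.coe_le_coe.mpr h2
  push_cast [NNReal.coe_rpow] at this ⊢
  exact this

lemma gaussian_pdf_mul_exp (t x : ℝ) :
    rexp (t * x) * gaussianPDFReal 0 1 x = rexp (t ^ 2 / 2) * gaussianPDFReal t 1 x := by
  simp only [gaussianPDFReal, NNReal.coe_one, mul_one, sub_zero]
  rw [mul_left_comm, ← Real.exp_add, mul_left_comm, ← Real.exp_add]
  congr 2
  ring

lemma integral_exp_gaussianReal (t : ℝ) :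
    ∫ x, rexp (t * x) ∂(gaussianReal 0 1) = rexp (t ^ 2 / 2) := by
  rw [gaussianReal_of_var_ne_zero 0 one_ne_zero]
  have hm : Measurable fun x => (gaussianPDFReal 0 1 x).toNNReal :=
    (measurable_gaussianPDFReal 0 1).real_toNNReal
  rw [show gaussianPDF 0 1 = fun x => ((gaussianPDFReal 0 1 x).toNNReal : ENNReal) from rfl,
    integral_withDensity_eq_integral_smul hm]
  have : ∀ x : ℝ, (gaussianPDFReal 0 1 x).toNNReal • rexp (t * x)
      = rexp (t ^ 2 / 2) * gaussianPDFReal t 1 x := by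
    intro x
    rw [NNReal.smul_def, Real.coe_toNNReal _ (gaussianPDFReal_nonneg 0 1 x), smul_eq_mul,
      mul_comm, gaussian_pdf_mul_exp]
  simp_rw [this]
  rw [integral_const_mul, integral_gaussianPDFReal_eq_one t one_ne_zero, mul_one]

lemma integrable_exp_gaussianReal (t : ℝ) :
    Integrable (fun x => rexp (t * x)) (gaussianReal 0 1) := by
  rw [gaussianReal_of_var_ne_zero 0 one_ne_zero]
  have hm : Measurable fun x => (gaussianPDFReal 0 1 x).toNNReal :=
    (measurable_gaussianPDFReal 0 1).real_toNNReal
  rw [show gaussianPDF 0 1 = fun x => ((gaussianPDFReal 0 1 x).toNNReal : ENNReal) from rfl,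
    integrable_withDensity_iff_integrable_smul hm]
  have : (fun x : ℝ => (gaussianPDFReal 0 1 x).toNNReal • rexp (t * x))
      = fun x => rexp (t ^ 2 / 2) * gaussianPDFReal t 1 x := by
    funext x
    rw [NNReal.smul_def, Real.coe_toNNReal _ (gaussianPDFReal_nonneg 0 1 x), smul_eq_mul,
      mul_comm, gaussian_pdf_mul_exp]
  rw [this]
  exact (integrable_gaussianPDFReal t 1).const_mul _


/-- for `λ > 0`, `0 < γ < ρ < 1`, `h = ρλ` and a finite `I ⊂ ℕ`, the
fractional moment of `φ(I) = (1+exp(-2λh|I| - 2λ Σ_{i∈I} ω_i))/2` under the IID standard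
Gaussian law satisfies
`𝔼[φ(I)^γ] ≤ (1+exp(2λ²γ(γ-ρ)|I|))/2^γ ≤ 2^{1-γ}`. -/
theorem fractional_moment_of_phi
    (P : Measure (ℕ → ℝ)) (hP : IsGaussianDisorder P)
    (lam γ ρ : ℝ) (hlam : 0 < lam) (hγ0 : 0 < γ) (hγρ : γ < ρ) (hρ1 : ρ < 1)
    (I : Finset ℕ) :
    (∫ ω, ((1 + Real.exp (-(2 * lam * (ρ * lam) * (I.card : ℝ))
          - 2 * lam * ∑ i ∈ I, ω i)) / 2) ^ γ ∂P) ≤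
        (1 + Real.exp (2 * lam ^ 2 * γ * (γ - ρ) * (I.card : ℝ))) / 2 ^ γ ∧
      (1 + Real.exp (2 * lam ^ 2 * γ * (γ - ρ) * (I.card : ℝ))) / 2 ^ γ ≤
        2 ^ (1 - γ) := by
  obtain ⟨hprob, hindep, hlaw⟩ := hP
  haveI : IsProbabilityMeasure P := hprob
  have hγ1 : γ ≤ 1 := le_of_lt (hγρ.trans hρ1)
  set t : ℝ := -(2 * lam * γ) with ht
  set c : ℝ := 2 * lam * (ρ * lam) * (I.card : ℝ) with hc
  -- integrability of exp(t * ω i)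
  have hXi : ∀ i : ℕ, Measurable fun ω : ℕ → ℝ => ω i := fun i => measurable_pi_apply i
  have hint_i : ∀ i ∈ I, Integrable (fun ω : ℕ → ℝ => rexp (t * ω i)) P := by
    intro i _
    have : Integrable ((fun x => rexp (t * x)) ∘ fun ω : ℕ → ℝ => ω i) P := by
      rw [← integrable_map_measure ?_ (hXi i).aemeasurable]
      · rw [hlaw i]; exact integrable_exp_gaussianReal t
      · rw [hlaw i]
        exact (Real.continuous_exp.comp (continuous_const.mul continuous_id)).aestronglyMeasurable
    exact this
  have hS_int : Integrable (fun ω : ℕ → ℝ => rexp (t * ∑ i ∈ I, ω i)) P := by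
    have := hindep.integrable_exp_mul_sum hXi (s := I) hint_i
    simpa using this
  -- mgf of the sum
  have hmgf_i : ∀ i : ℕ, mgf (fun ω : ℕ → ℝ => ω i) P t = rexp (t ^ 2 / 2) := by
    intro i
    have hf : AEStronglyMeasurable (fun x : ℝ => rexp (t * x)) (P.map fun ω : ℕ → ℝ => ω i) :=
      (Real.continuous_exp.comp (continuous_const.mul continuous_id)).aestronglyMeasurable
    have h := integral_map (hXi i).aemeasurable hf
    rw [hlaw i, integral_exp_gaussianReal] at h
    exact h.symm
  have hmgf : ∫ ω, rexp (t * ∑ i ∈ I, ω i) ∂P = rexp (t ^ 2 / 2 * (I.card : ℝ)) := by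
    have h1 : mgf (∑ i ∈ I, fun ω : ℕ → ℝ => ω i) P t
        = ∏ i ∈ I, mgf (fun ω : ℕ → ℝ => ω i) P t := hindep.mgf_sum hXi I
    simp only [hmgf_i, prod_const] at h1
    rw [mgf] at h1
    simp only [Finset.sum_apply] at h1
    rw [h1, ← Real.exp_nat_mul]
    ring_nf
  constructor
  · -- main bound
    have hptwise : ∀ ω : ℕ → ℝ,
        ((1 + rexp (-c - 2 * lam * ∑ i ∈ I, ω i)) / 2) ^ γ
          ≤ (1 + rexp (γ * (-c)) * rexp (t * ∑ i ∈ I, ω i)) / 2 ^ γ := by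
      intro ω
      set x : ℝ := rexp (-c - 2 * lam * ∑ i ∈ I, ω i) with hx
      have hx0 : 0 ≤ x := (Real.exp_pos _).le
      have h1x : (0:ℝ) ≤ 1 + x := by linarith
      rw [Real.div_rpow h1x (by norm_num)]
      have hxγ : x ^ γ = rexp (γ * (-c)) * rexp (t * ∑ i ∈ I, ω i) := by
        rw [hx, ← Real.exp_mul, ← Real.exp_add]
        congr 1
        rw [ht]; ring
      rw [← hxγ]
      gcongr
      exact rpow_one_add_le x γ hx0 hγ0 hγ1
    have hG_int : Integrable
        (fun ω : ℕ → ℝ => (1 + rexp (γ * (-c)) * rexp (t * ∑ i ∈ I, ω i)) / 2 ^ γ) P := by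
      exact (((integrable_const (1:ℝ)).add (hS_int.const_mul _)).div_const _)
    have hmono : (∫ ω, ((1 + rexp (-c - 2 * lam * ∑ i ∈ I, ω i)) / 2) ^ γ ∂P)
        ≤ ∫ ω, (1 + rexp (γ * (-c)) * rexp (t * ∑ i ∈ I, ω i)) / 2 ^ γ ∂P := by
      refine integral_mono_of_nonneg (Filter.Eventually.of_forall fun ω => ?_) hG_int
        (Filter.Eventually.of_forall hptwise)
      positivity
    refine hmono.trans (le_of_eq ?_)
    rw [show (fun ω : ℕ → ℝ => (1 + rexp (γ * (-c)) * rexp (t * ∑ i ∈ I, ω i)) / 2 ^ γ)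
        = fun ω : ℕ → ℝ => ((1 : ℝ) + rexp (γ * (-c)) * rexp (t * ∑ i ∈ I, ω i)) / 2 ^ γ
        from rfl]
    rw [integral_div, integral_add (integrable_const 1) (hS_int.const_mul _),
      integral_const_mul, hmgf, integral_const, probReal_univ, smul_eq_mul,
      mul_one, ← Real.exp_add]
    congr 2
    rw [ht, hc]; ring
  · -- second bound
    have hle1 : rexp (2 * lam ^ 2 * γ * (γ - ρ) * (I.card : ℝ)) ≤ 1 := by
      rw [Real.exp_le_one_iff]
      have h1 : 2 * lam ^ 2 * γ * (γ - ρ) ≤ 0 := by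
        have : (0:ℝ) < 2 * lam ^ 2 * γ := by positivity
        nlinarith
      exact mul_nonpos_of_nonpos_of_nonneg h1 (Nat.cast_nonneg _)
    have h2γ : (0:ℝ) < (2:ℝ) ^ γ := Real.rpow_pos_of_pos (by norm_num) γ
    rw [div_le_iff₀ h2γ, Real.rpow_sub (by norm_num : (0:ℝ) < 2), Real.rpow_one,
      div_mul_cancel₀ _ h2γ.ne']
    linarith
end
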